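/- For every n ≥ 1 there exist Hermitian matrices M_1, …, M_n indexed by {0,1}^n × {0,1} with operator norm ‖M_i‖ ≤ 1, and a function g : ℝ^n → {0,1}^n, such that for every s ∈ {0,1}^n the following holds: letting ψ_s be the uniform quantum example of the parity function x ↦ s·x mod 2, for every α ∈ ℝ^n satisfying |α_i − ⟨ψ_s, M_i ψ_s⟩| ≤ 1/3 for all i ∈ [n], one has g(α) = s. In other words, the class of parity functions on n bits can be exactly learned under the uniform distribution with n quantum statistical queries of tolerance 1/3. -/

import Mathlib

open Finset Matrix

/-- The quantum example under the uniform distribution of the parity function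
`x ↦ s·x mod 2`, as a vector in `ℂ^({0,1}^n × {0,1})`. -/
noncomputable def parityExample {n : ℕ} (s : Fin n → ZMod 2) :
    (Fin n → ZMod 2) × ZMod 2 → ℂ :=
  fun p => if p.2 = ∑ i, s i * p.1 i then (((Real.sqrt (2 ^ n))⁻¹ : ℝ) : ℂ) else 0

namespace QSQ

variable {n : ℕ}

def eVec (i : Fin n) : Fin n → ZMod 2 := fun j => if j = i then 1 else 0

lemma eVec_add_self (i : Fin n) : eVec i + eVec i = 0 := by
  ext j; simp only [eVec, Pi.add_apply, Pi.zero_apply]; split_ifs <;> decide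

lemma add_eVec_iff (i : Fin n) (x y : Fin n → ZMod 2) :
    (x = y + eVec i) ↔ (y = x + eVec i) := by
  constructor <;> rintro rfl <;> rw [add_assoc, eVec_add_self, add_zero]

noncomputable def sgn (b c : ZMod 2) : ℂ := if b = c then (1/2 : ℂ) else -(1/2)

lemma sgn_comm (b c : ZMod 2) : sgn b c = sgn c b := by
  unfold sgn; simp [eq_comm]

lemma star_sgn (b c : ZMod 2) : star (sgn b c) = sgn b c := by
  unfold sgn; split_ifs <;> simp

lemma sum_sgn (b c : ZMod 2) : ∑ d : ZMod 2, sgn b d * sgn d c = sgn b c := by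
  have h2 : ∀ a : ZMod 2, a = 0 ∨ a = 1 := by decide
  have hsum : ∀ f : ZMod 2 → ℂ, ∑ d : ZMod 2, f d = f 0 + f 1 := fun f =>
    Fin.sum_univ_two f
  rcases h2 b with hb | hb <;> rcases h2 c with hc | hc <;>
    subst hb <;> subst hc <;> rw [hsum] <;> norm_num [sgn]

noncomputable def Mq (i : Fin n) :
    Matrix ((Fin n → ZMod 2) × ZMod 2) ((Fin n → ZMod 2) × ZMod 2) ℂ :=
  fun p q => if q.1 = p.1 + eVec i then sgn p.2 q.2 else 0

noncomputable def Pq (n : ℕ) :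
    Matrix ((Fin n → ZMod 2) × ZMod 2) ((Fin n → ZMod 2) × ZMod 2) ℂ :=
  fun p q => if q.1 = p.1 then sgn p.2 q.2 else 0

lemma Mq_herm (i : Fin n) : (Mq i).IsHermitian := by
  ext ⟨x, b⟩ ⟨y, c⟩
  simp only [Matrix.conjTranspose_apply, Mq]
  by_cases h : y = x + eVec i
  · rw [if_pos ((add_eVec_iff i x y).mpr h), if_pos h, star_sgn, sgn_comm]
  · rw [if_neg (fun hh => h ((add_eVec_iff i x y).mp hh)), if_neg h, star_zero]

lemma Mq_mul_Mq (i : Fin n) : Mq i * Mq i = Pq n := by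
  ext ⟨x, b⟩ ⟨y, c⟩
  rw [Matrix.mul_apply, Fintype.sum_prod_type, Finset.sum_comm]
  simp only [Mq, Pq, ite_mul, zero_mul, Fintype.sum_ite_eq']
  rw [show x + eVec i + eVec i = x by rw [add_assoc, eVec_add_self, add_zero]]
  simp only [mul_ite, mul_zero]
  by_cases h : y = x
  · simp [h, sum_sgn]
  · simp [h]

lemma Mq_mul_Pq (i : Fin n) : Mq i * Pq n = Mq i := by
  ext ⟨x, b⟩ ⟨y, c⟩
  rw [Matrix.mul_apply, Fintype.sum_prod_type, Finset.sum_comm]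
  simp only [Mq, Pq, ite_mul, zero_mul, Fintype.sum_ite_eq']
  simp only [mul_ite, mul_zero]
  by_cases h : y = x + eVec i
  · simp [h, sum_sgn]
  · simp [h]

lemma Mq_norm (i : Fin n) : ‖Matrix.toEuclideanCLM (𝕜 := ℂ) (Mq i)‖ ≤ 1 := by
  set T := Matrix.toEuclideanCLM (𝕜 := ℂ) (Mq i) with hT
  have hstar : star T = T := by
    rw [hT, ← map_star]
    congr 1
    exact (Mq_herm i)
  have hmul : T * (T * T) = T := by
    rw [hT, ← _root_.map_mul, ← _root_.map_mul, Mq_mul_Mq, Mq_mul_Pq]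
  have h1 : ‖T‖ * ‖T‖ = ‖T * T‖ := by
    rw [← CStarRing.norm_star_mul_self (x := T), hstar]
  have hstar2 : star (T * T) = T * T := by rw [StarMul.star_mul, hstar]
  have h2 : ‖T * T‖ * ‖T * T‖ = ‖T * T‖ := by
    rw [← CStarRing.norm_star_mul_self (x := T * T), hstar2]
    rw [mul_assoc, hmul]
  have ht : ‖T * T‖ ≤ 1 := by nlinarith [norm_nonneg (T * T)]
  nlinarith [norm_nonneg T]

lemma expectation (s : Fin n → ZMod 2) (i : Fin n) :
    star (parityExample s) ⬝ᵥ (Mq i).mulVec (parityExample s)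
      = if s i = 0 then (1/2 : ℂ) else -(1/2) := by
  set r : ℂ := (((Real.sqrt (2 ^ n))⁻¹ : ℝ) : ℂ) with hrdef
  have hr : r * r = (((2 ^ n : ℝ)⁻¹ : ℝ) : ℂ) := by
    rw [hrdef, ← Complex.ofReal_mul, ← mul_inv, Real.mul_self_sqrt (by positivity)]
  have hdot : ∀ x : Fin n → ZMod 2,
      ∑ j, s j * (x j + eVec i j) = (∑ j, s j * x j) + s i := by
    intro x
    simp only [mul_add, Finset.sum_add_distrib]
    congr 1
    simp [eVec, mul_ite]
  have hsgn : ∀ a : ZMod 2, sgn a (a + s i) = if s i = 0 then (1/2 : ℂ) else -(1/2) := by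
    intro a
    simp [sgn, left_eq_add]
  simp only [dotProduct, Matrix.mulVec, Pi.star_apply, parityExample, Mq, ← hrdef]
  rw [Fintype.sum_prod_type]
  have hinner : ∀ (x : Fin n → ZMod 2) (b : ZMod 2),
      (∑ q : (Fin n → ZMod 2) × ZMod 2,
        (if q.1 = x + eVec i then sgn b q.2 else 0) *
          (if q.2 = ∑ j, s j * q.1 j then r else 0))
        = sgn b ((∑ j, s j * x j) + s i) * r := by
    intro x b
    rw [Fintype.sum_prod_type, Finset.sum_comm]
    simp only [ite_mul, zero_mul, Fintype.sum_ite_eq']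
    simp only [mul_ite, mul_zero, Fintype.sum_ite_eq']
    simp only [Pi.add_apply]
    rw [hdot x]
  simp only [hinner]
  simp only [apply_ite (star : ℂ → ℂ), star_zero, RCLike.star_def, Complex.conj_ofReal, ← hrdef]
  simp only [ite_mul, zero_mul, Fintype.sum_ite_eq']
  simp only [hsgn]
  rw [Finset.sum_const, Finset.card_univ]
  have hcard : Fintype.card (Fin n → ZMod 2) = 2 ^ n := by
    simp [Fintype.card_fun]
  rw [hcard, nsmul_eq_mul]
  have h2 : ((2 : ℂ) ^ n) ≠ 0 := pow_ne_zero _ two_ne_zero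
  have hconj : (starRingEnd ℂ) r = r := by rw [hrdef]; exact Complex.conj_ofReal _
  rw [hconj]
  rw [show r * ((if s i = 0 then (1/2:ℂ) else -(1/2)) * r)
      = (if s i = 0 then (1/2:ℂ) else -(1/2)) * (r * r) by ring, hr]
  push_cast
  rw [show ((2:ℂ)^n : ℂ) * ((if s i = 0 then (1/2:ℂ) else -(1/2)) * ((2:ℂ)^n)⁻¹)
      = (if s i = 0 then (1/2:ℂ) else -(1/2)) * (((2:ℂ)^n) * ((2:ℂ)^n)⁻¹) by ring,
    mul_inv_cancel₀ h2, mul_one]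


end QSQ

/-- The class of parity functions on `n` bits can be exactly learned under
the uniform distribution with `n` quantum statistical queries of tolerance
`1/3`: there are Hermitian observables `M₁, …, Mₙ` of operator norm at most
`1` and a decoding function `g` such that any answers `α` that are `1/3`-close
to the true expectations `⟨ψ_s, M_i ψ_s⟩` determine `s` via `g α = s`. -/


theorem stmt3 (n : ℕ) (hn : 1 ≤ n) :
    ∃ (M : Fin n →
        Matrix ((Fin n → ZMod 2) × ZMod 2) ((Fin n → ZMod 2) × ZMod 2) ℂ)
      (g : (Fin n → ℝ) → (Fin n → ZMod 2)),
      (∀ i, (M i).IsHermitian ∧ ‖Matrix.toEuclideanCLM (𝕜 := ℂ) (M i)‖ ≤ 1) ∧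
      ∀ (s : Fin n → ZMod 2) (α : Fin n → ℝ),
        (∀ i, ‖(α i : ℂ) -
            star (parityExample s) ⬝ᵥ (M i).mulVec (parityExample s)‖ ≤ 1 / 3) →
        g α = s := by
  classical
  refine ⟨fun i => QSQ.Mq i, fun α i => if α i < 0 then 1 else 0,
    fun i => ⟨QSQ.Mq_herm i, QSQ.Mq_norm i⟩, ?_⟩
  intro s α h
  funext i
  have hi := h i
  rw [QSQ.expectation s i] at hi
  have h2 : s i = 0 ∨ s i = 1 := by
    have : ∀ a : ZMod 2, a = 0 ∨ a = 1 := by decide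
    exact this (s i)
  show (if α i < 0 then (1 : ZMod 2) else 0) = s i
  rcases h2 with hsi | hsi
  · rw [hsi, if_pos rfl] at hi
    have habs : |α i - 1/2| ≤ 1/3 := by
      rwa [show ((α i : ℂ) - (1/2 : ℂ)) = (((α i - 1/2 : ℝ)) : ℂ) by push_cast; ring,
        Complex.norm_real, Real.norm_eq_abs] at hi
    have h3 := abs_le.mp habs
    rw [hsi, if_neg (by linarith [h3.1])]
  · rw [hsi, if_neg one_ne_zero] at hi
    have habs : |α i + 1/2| ≤ 1/3 := by
      rwa [show ((α i : ℂ) - -(1/2 : ℂ)) = (((α i + 1/2 : ℝ)) : ℂ) by push_cast; ring,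
        Complex.norm_real, Real.norm_eq_abs] at hi
    have h3 := abs_le.mp habs
    rw [hsi, if_pos (by linarith [h3.2])]
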